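/- If G = G1 × G2 is the Cartesian product of connected graphs G1 and G2, then rt(G) ≤ 2·min(rt(G1), rt(G2)) + max(rt(G1), rt(G2)). -/

import Mathlib

/-- A single routing step on `G`: an involutive permutation that swaps the pebbles
on the endpoints of each edge of a matching of `G`. -/
def IsMatchingStep {V : Type*} (G : SimpleGraph V) (σ : Equiv.Perm V) : Prop :=
  (∀ v, σ (σ v) = v) ∧ ∀ v, σ v ≠ v → G.Adj v (σ v)

/-- The permutation `π` (giving the destination of each pebble) can be routed on `G`
in `k` matching steps. -/
def RoutableIn {V : Type*} (G : SimpleGraph V) (π : Equiv.Perm V) (k : ℕ) : Prop :=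
  ∃ L : List (Equiv.Perm V), L.length = k ∧ (∀ σ ∈ L, IsMatchingStep G σ) ∧
    L.reverse.prod = π

/-- The routing time `rt(G, π)`: the minimum number of matching steps needed to
route `π` on `G`. -/
noncomputable def routingTime {V : Type*} (G : SimpleGraph V) (π : Equiv.Perm V) : ℕ :=
  sInf {k | RoutableIn G π k}

/-- The routing number `rt(G)`: the maximum of `rt(G, π)` over all permutations `π`. -/
noncomputable def routingNumber {V : Type*} (G : SimpleGraph V) : ℕ :=
  sSup (Set.range fun π : Equiv.Perm V => routingTime G π)

theorem Equiv.Perm.apply_inv_self {α : Type*} (f : Equiv.Perm α) (x : α) : f (f⁻¹ x) = x :=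
  f.apply_symm_apply x

theorem Equiv.Perm.inv_apply_self {α : Type*} (f : Equiv.Perm α) (x : α) : f⁻¹ (f x) = x :=
  f.symm_apply_apply x

namespace RoutingAux

open Equiv

variable {V : Type*} {G : SimpleGraph V}

lemma isMatchingStep_one : IsMatchingStep G 1 :=
  ⟨fun _ => rfl, fun v h => absurd rfl h⟩

lemma routableIn_one : RoutableIn G 1 0 := ⟨[], rfl, by simp, by simp⟩

lemma routable_mono {π : Perm V} {k m : ℕ} (h : RoutableIn G π k) (hkm : k ≤ m) :
    RoutableIn G π m := by
  obtain ⟨L, hL, hsteps, hprod⟩ := h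
  refine ⟨L ++ List.replicate (m - k) 1, by simp [hL]; omega, ?_, ?_⟩
  · intro σ hσ
    rcases List.mem_append.1 hσ with h | h
    · exact hsteps σ h
    · rw [List.eq_of_mem_replicate h]; exact isMatchingStep_one
  · rw [List.reverse_append, List.prod_append, hprod]
    simp

lemma routable_mul {π ρ : Perm V} {k m : ℕ} (hπ : RoutableIn G π k)
    (hρ : RoutableIn G ρ m) : RoutableIn G (π * ρ) (m + k) := by
  obtain ⟨L, hL, hLs, hLp⟩ := hπ
  obtain ⟨M, hM, hMs, hMp⟩ := hρ
  refine ⟨M ++ L, by simp [hL, hM], ?_, ?_⟩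
  · intro σ hσ; rcases List.mem_append.1 hσ with h | h
    exacts [hMs σ h, hLs σ h]
  · rw [List.reverse_append, List.prod_append, hLp, hMp]

lemma routable_inv {π : Perm V} {k : ℕ} (h : RoutableIn G π k) :
    RoutableIn G π⁻¹ k := by
  obtain ⟨L, hL, hLs, hLp⟩ := h
  refine ⟨L.reverse, by simp [hL], fun σ hσ => hLs σ (List.mem_reverse.1 hσ), ?_⟩
  have hmap : L.map (fun x => x⁻¹) = L := by
    conv_rhs => rw [← List.map_id L]
    refine List.map_congr_left fun σ hσ => ?_
    have h2 := (hLs σ hσ).1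
    exact Equiv.ext fun v => σ.injective (by
      simp only [Equiv.Perm.apply_inv_self, id_eq]; exact (h2 v).symm)
  rw [List.reverse_reverse, ← hLp, List.prod_reverse_noncomm, hmap, inv_inv]

/-- The set of routable permutations forms a subgroup. -/
noncomputable def routableSubgroup (G : SimpleGraph V) : Subgroup (Perm V) where
  carrier := {π | ∃ k, RoutableIn G π k}
  one_mem' := ⟨0, routableIn_one⟩
  mul_mem' := fun ⟨k, hk⟩ ⟨m, hm⟩ => ⟨m + k, routable_mul hk hm⟩
  inv_mem' := fun ⟨k, hk⟩ => ⟨k, routable_inv hk⟩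

lemma swap_mem_of_adj [DecidableEq V] {x y : V} (hxy : G.Adj x y) :
    Equiv.swap x y ∈ routableSubgroup G := by
  refine ⟨1, [Equiv.swap x y], rfl, ?_, by simp⟩
  rintro σ hσ
  rw [List.mem_singleton] at hσ
  subst hσ
  refine ⟨fun v => Equiv.swap_apply_self _ _ _, fun v hv => ?_⟩
  rcases eq_or_ne v x with rfl | hvx
  · rwa [Equiv.swap_apply_left]
  rcases eq_or_ne v y with rfl | hvy
  · rw [Equiv.swap_apply_right]; exact hxy.symm
  · rw [Equiv.swap_apply_of_ne_of_ne hvx hvy] at hv; exact absurd rfl hv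

lemma swap_mem_of_walk [DecidableEq V] {a b : V} (w : G.Walk a b) :
    Equiv.swap a b ∈ routableSubgroup G := by
  induction w with
  | @nil u =>
    have : Equiv.swap u u = 1 := by ext v; simp
    rw [this]; exact ⟨0, routableIn_one⟩
  | @cons a c b hac p ih =>
    rcases eq_or_ne a b with rfl | hab
    · have : Equiv.swap a a = 1 := by ext v; simp
      rw [this]; exact ⟨0, routableIn_one⟩
    rcases eq_or_ne c b with rfl | hcb
    · exact swap_mem_of_adj hac
    · have key : Equiv.swap a b =
          Equiv.swap a c * Equiv.swap c b * (Equiv.swap a c)⁻¹ := by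
        rw [← Equiv.swap_apply_apply, Equiv.swap_apply_right,
          Equiv.swap_apply_of_ne_of_ne (Ne.symm hab) (Ne.symm hcb)]
      rw [key]
      exact mul_mem (mul_mem (swap_mem_of_adj hac) ih) (inv_mem (swap_mem_of_adj hac))

lemma exists_routableIn [Finite V] (h : G.Connected) (π : Perm V) :
    ∃ k, RoutableIn G π k := by
  classical
  have : π ∈ routableSubgroup G := by
    have htop : Subgroup.closure {σ : Perm V | σ.IsSwap} ≤ routableSubgroup G := by
      rw [Subgroup.closure_le]
      rintro σ ⟨a, b, -, rfl⟩
      obtain ⟨w⟩ := h.preconnected a b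
      exact swap_mem_of_walk w
    exact htop (by rw [Equiv.Perm.closure_isSwap]; trivial)
  exact this

lemma routableIn_routingTime [Finite V] (h : G.Connected) (π : Perm V) :
    RoutableIn G π (routingTime G π) :=
  Nat.sInf_mem (exists_routableIn h π)

lemma routingTime_le {π : Perm V} {k : ℕ} (h : RoutableIn G π k) :
    routingTime G π ≤ k :=
  Nat.sInf_le h

lemma routingTime_le_routingNumber [Finite V] (π : Perm V) :
    routingTime G π ≤ routingNumber G := by
  have : Set.Finite (Set.range fun π : Perm V => routingTime G π) :=
    Set.finite_range _
  exact le_csSup this.bddAbove ⟨π, rfl⟩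

lemma routableIn_routingNumber [Finite V] (h : G.Connected) (π : Perm V) :
    RoutableIn G π (routingNumber G) :=
  routable_mono (routableIn_routingTime h π) (routingTime_le_routingNumber π)

lemma routingNumber_le {N : ℕ} (h : ∀ π : Perm V, routingTime G π ≤ N) :
    routingNumber G ≤ N :=
  csSup_le (Set.range_nonempty _) (by rintro n ⟨π, rfl⟩; exact h π)

section Iso

variable {V' : Type*} {G' : SimpleGraph V'}

/-- Conjugation of permutations by an equivalence, as a monoid hom. -/
def conjHom (e : V ≃ V') : Perm V →* Perm V' where
  toFun := e.permCongr
  map_one' := by ext x; simp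
  map_mul' σ τ := by ext x; simp

lemma isMatchingStep_conj (e : G ≃g G') {σ : Perm V} (h : IsMatchingStep G σ) :
    IsMatchingStep G' (e.toEquiv.permCongr σ) := by
  constructor
  · intro v
    simp only [Equiv.permCongr_apply, Equiv.symm_apply_apply, h.1, Equiv.apply_symm_apply]
  · intro v hv
    simp only [Equiv.permCongr_apply] at hv ⊢
    have hne : σ (e.toEquiv.symm v) ≠ e.toEquiv.symm v := by
      intro hc; apply hv; rw [hc]; simp
    conv_lhs => rw [← Equiv.apply_symm_apply e.toEquiv v]
    exact e.map_adj_iff.2 (h.2 _ hne)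

lemma routableIn_conj (e : G ≃g G') {π : Perm V} {k : ℕ} (h : RoutableIn G π k) :
    RoutableIn G' (e.toEquiv.permCongr π) k := by
  obtain ⟨L, hL, hLs, hLp⟩ := h
  refine ⟨L.map (conjHom e.toEquiv), by simp [hL], ?_, ?_⟩
  · intro σ hσ
    obtain ⟨τ, hτ, rfl⟩ := List.mem_map.1 hσ
    exact isMatchingStep_conj e (hLs τ hτ)
  · rw [← List.map_reverse, ← map_list_prod (conjHom e.toEquiv), hLp]
    rfl

lemma routingTime_conj (e : G ≃g G') (π : Perm V) :
    routingTime G' (e.toEquiv.permCongr π) = routingTime G π := by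
  unfold routingTime
  congr 1
  ext k
  constructor
  · intro h
    have h2 := routableIn_conj e.symm h
    have : (e.symm.toEquiv.permCongr (e.toEquiv.permCongr π)) = π := by
      ext x
      show e.symm.toEquiv (e.toEquiv (π (e.toEquiv.symm (e.symm.toEquiv.symm x)))) = π x
      have ha : ∀ y, e.symm.toEquiv y = e.toEquiv.symm y := fun y => rfl
      have hb : ∀ y, e.symm.toEquiv.symm y = e.toEquiv y := fun y => rfl
      rw [ha, hb]
      simp only [Equiv.symm_apply_apply]
    rwa [this] at h2
  · exact routableIn_conj e

lemma routingNumber_congr (e : G ≃g G') : routingNumber G = routingNumber G' := by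
  unfold routingNumber
  congr 1
  ext n
  constructor
  · rintro ⟨π, rfl⟩
    exact ⟨e.toEquiv.permCongr π, routingTime_conj e π⟩
  · rintro ⟨π', rfl⟩
    have h3 := routingTime_conj e (e.toEquiv.permCongr.symm π')
    rw [Equiv.apply_symm_apply] at h3
    exact ⟨e.toEquiv.permCongr.symm π', h3.symm⟩

end Iso

section Prod

variable {V1 V2 : Type*} {G1 : SimpleGraph V1} {G2 : SimpleGraph V2}

/-- Fiberwise permutations (acting in the `G2`-copies) as a monoid hom. -/
def fiberHom (V1 V2 : Type*) : (V1 → Perm V2) →* Perm (V1 × V2) where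
  toFun g :=
    { toFun := fun p => (p.1, g p.1 p.2)
      invFun := fun p => (p.1, (g p.1)⁻¹ p.2)
      left_inv := fun p => by simp
      right_inv := fun p => by simp }
  map_one' := by ext p <;> simp
  map_mul' g h := by ext p <;> simp

/-- Rowwise permutations (acting in the `G1`-copies) as a monoid hom. -/
def rowHom (V1 V2 : Type*) : (V2 → Perm V1) →* Perm (V1 × V2) where
  toFun g :=
    { toFun := fun p => (g p.2 p.1, p.2)
      invFun := fun p => ((g p.2)⁻¹ p.1, p.2)
      left_inv := fun p => by simp
      right_inv := fun p => by simp }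
  map_one' := by ext p <;> simp
  map_mul' g h := by ext p <;> simp

@[simp] lemma fiberHom_apply (g : V1 → Perm V2) (p : V1 × V2) :
    fiberHom V1 V2 g p = (p.1, g p.1 p.2) := rfl

@[simp] lemma rowHom_apply (g : V2 → Perm V1) (p : V1 × V2) :
    rowHom V1 V2 g p = (g p.2 p.1, p.2) := rfl

lemma isMatchingStep_fiberHom {g : V1 → Perm V2}
    (hg : ∀ u, IsMatchingStep G2 (g u)) :
    IsMatchingStep (G1.boxProd G2) (fiberHom V1 V2 g) := by
  constructor
  · intro p; simp [(hg p.1).1]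
  · intro p hp
    have h2 : g p.1 p.2 ≠ p.2 := by
      intro hc; apply hp; ext <;> simp [hc]
    have := (hg p.1).2 p.2 h2
    simp only [fiberHom_apply, SimpleGraph.boxProd_adj]
    exact Or.inr ⟨this, trivial⟩

lemma isMatchingStep_rowHom {g : V2 → Perm V1}
    (hg : ∀ v, IsMatchingStep G1 (g v)) :
    IsMatchingStep (G1.boxProd G2) (rowHom V1 V2 g) := by
  constructor
  · intro p; simp [(hg p.2).1]
  · intro p hp
    have h2 : g p.2 p.1 ≠ p.1 := by
      intro hc; apply hp; ext <;> simp [hc]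
    have := (hg p.2).2 p.1 h2
    simp only [rowHom_apply, SimpleGraph.boxProd_adj]
    exact Or.inl ⟨this, trivial⟩

/-- Any collection of permutations, one per fiber, can be routed in parallel. -/
lemma routableIn_fiberHom {K : ℕ} {g : V1 → Perm V2}
    (hg : ∀ u, RoutableIn G2 (g u) K) :
    RoutableIn (G1.boxProd G2) (fiberHom V1 V2 g) K := by
  choose L hlen hsteps hprod using hg
  refine ⟨List.ofFn (fun i : Fin K => fiberHom V1 V2 (fun u => (L u).get (Fin.cast (hlen u).symm i))),
    by simp, ?_, ?_⟩
  · intro σ hσ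
    obtain ⟨i, rfl⟩ := List.mem_ofFn.1 hσ
    exact isMatchingStep_fiberHom fun u => hsteps u _ (List.get_mem _ _)
  · have hofn : ∀ u, List.ofFn (fun i : Fin K => (L u).get (Fin.cast (hlen u).symm i)) = L u := by
      intro u
      apply List.ext_get (by simp [hlen u])
      intro n h1 h2
      simp
    have : (List.ofFn (fun i : Fin K => fiberHom V1 V2
        (fun u => (L u).get (Fin.cast (hlen u).symm i)))) =
        (List.ofFn (fun i : Fin K => (fun u => (L u).get (Fin.cast (hlen u).symm i)))).map
          (fiberHom V1 V2) := by
      rw [List.map_ofFn]; rfl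
    rw [this, ← List.map_reverse, ← map_list_prod (fiberHom V1 V2)]
    congr 1
    funext u
    rw [Pi.list_prod_apply, List.map_reverse, List.map_ofFn]
    show (List.ofFn fun i : Fin K => (L u).get (Fin.cast (hlen u).symm i)).reverse.prod = g u
    rw [hofn u, hprod u]

/-- Any collection of permutations, one per row, can be routed in parallel. -/
lemma routableIn_rowHom {K : ℕ} {g : V2 → Perm V1}
    (hg : ∀ v, RoutableIn G1 (g v) K) :
    RoutableIn (G1.boxProd G2) (rowHom V1 V2 g) K := by
  choose L hlen hsteps hprod using hg
  refine ⟨List.ofFn (fun i : Fin K => rowHom V1 V2 (fun v => (L v).get (Fin.cast (hlen v).symm i))),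
    by simp, ?_, ?_⟩
  · intro σ hσ
    obtain ⟨i, rfl⟩ := List.mem_ofFn.1 hσ
    exact isMatchingStep_rowHom fun v => hsteps v _ (List.get_mem _ _)
  · have hofn : ∀ v, List.ofFn (fun i : Fin K => (L v).get (Fin.cast (hlen v).symm i)) = L v := by
      intro v
      apply List.ext_get (by simp [hlen v])
      intro n h1 h2
      simp
    have : (List.ofFn (fun i : Fin K => rowHom V1 V2
        (fun v => (L v).get (Fin.cast (hlen v).symm i)))) =
        (List.ofFn (fun i : Fin K => (fun v => (L v).get (Fin.cast (hlen v).symm i)))).map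
          (rowHom V1 V2) := by
      rw [List.map_ofFn]; rfl
    rw [this, ← List.map_reverse, ← map_list_prod (rowHom V1 V2)]
    congr 1
    funext v
    rw [Pi.list_prod_apply, List.map_reverse, List.map_ofFn]
    show (List.ofFn fun i : Fin K => (L v).get (Fin.cast (hlen v).symm i)).reverse.prod = g v
    rw [hofn v, hprod v]

section Hall

variable [Fintype V1] [DecidableEq V1] [Fintype V2] [DecidableEq V2]

lemma hallStep (π : Perm (V1 × V2)) (S : Finset (V1 × V2)) (k : ℕ) (hk : 0 < k)
    (hfib : ∀ u : V1, (S.filter (fun x => x.1 = u)).card = k)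
    (hdest : ∀ w : V1, (S.filter (fun x => (π x).1 = w)).card = k) :
    ∃ M ⊆ S, (∀ u, (M.filter (fun x => x.1 = u)).card = 1) ∧
      (∀ w, (M.filter (fun x => (π x).1 = w)).card = 1) := by
  set t : V1 → Finset V1 := fun u => (S.filter (fun x => x.1 = u)).image (fun x => (π x).1)
    with ht
  have hall : ∀ s : Finset V1, s.card ≤ (s.biUnion t).card := by
    intro s
    have hcount : (S.filter (fun x => x.1 ∈ s)).card = s.card * k := by
      have hsplit : S.filter (fun x => x.1 ∈ s) =
          s.biUnion (fun u => S.filter (fun x => x.1 = u)) := by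
        ext x
        simp only [Finset.mem_filter, Finset.mem_biUnion]
        constructor
        · rintro ⟨hxS, hxs⟩; exact ⟨x.1, hxs, hxS, rfl⟩
        · rintro ⟨u, hu, hxS, rfl⟩; exact ⟨hxS, hu⟩
      rw [hsplit, Finset.card_biUnion]
      · simp [hfib, Finset.sum_const, mul_comm]
      · intro u hu u' hu' huu'
        simp only [Finset.disjoint_left, Finset.mem_filter]
        rintro x ⟨-, rfl⟩ ⟨-, h⟩
        exact huu' h
    have hsub : S.filter (fun x => x.1 ∈ s) ⊆
        (s.biUnion t).biUnion (fun w => S.filter (fun x => (π x).1 = w)) := by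
      intro x hx
      rw [Finset.mem_filter] at hx
      rw [Finset.mem_biUnion]
      refine ⟨(π x).1, ?_, by simp [hx.1]⟩
      rw [Finset.mem_biUnion]
      exact ⟨x.1, hx.2, Finset.mem_image_of_mem _ (Finset.mem_filter.2 ⟨hx.1, rfl⟩)⟩
    have hle : s.card * k ≤ (s.biUnion t).card * k := by
      calc s.card * k = (S.filter (fun x => x.1 ∈ s)).card := hcount.symm
        _ ≤ ((s.biUnion t).biUnion (fun w => S.filter (fun x => (π x).1 = w))).card :=
            Finset.card_le_card hsub
        _ ≤ ∑ w ∈ s.biUnion t, (S.filter (fun x => (π x).1 = w)).card :=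
            Finset.card_biUnion_le
        _ = (s.biUnion t).card * k := by simp [hdest, Finset.sum_const, mul_comm]
    exact Nat.le_of_mul_le_mul_right hle hk
  obtain ⟨f, hfinj, hf⟩ := (Finset.all_card_le_biUnion_card_iff_exists_injective t).1 hall
  have hchoice : ∀ u : V1, ∃ x : V1 × V2, x ∈ S ∧ x.1 = u ∧ (π x).1 = f u := by
    intro u
    have := hf u
    rw [ht] at this
    simp only [Finset.mem_image, Finset.mem_filter] at this
    obtain ⟨x, ⟨hxS, hx1⟩, hx2⟩ := this
    exact ⟨x, hxS, hx1, hx2⟩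
  choose gfun hg1 hg2 hg3 using hchoice
  have hfsurj : Function.Surjective f := (Finite.injective_iff_bijective.1 hfinj).2
  refine ⟨Finset.univ.image gfun, ?_, ?_, ?_⟩
  · intro x hx
    obtain ⟨u, -, rfl⟩ := Finset.mem_image.1 hx
    exact hg1 u
  · intro u
    have heq : (Finset.univ.image gfun).filter (fun x => x.1 = u) = {gfun u} := by
      ext x
      simp only [Finset.mem_filter, Finset.mem_image, Finset.mem_singleton]
      constructor
      · rintro ⟨⟨u', -, rfl⟩, h⟩
        rw [hg2 u'] at h; rw [h]
      · rintro rfl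
        exact ⟨⟨u, Finset.mem_univ u, rfl⟩, hg2 u⟩
    rw [heq, Finset.card_singleton]
  · intro w
    obtain ⟨u, rfl⟩ := hfsurj w
    have heq : (Finset.univ.image gfun).filter (fun x => (π x).1 = f u) = {gfun u} := by
      ext x
      simp only [Finset.mem_filter, Finset.mem_image, Finset.mem_singleton]
      constructor
      · rintro ⟨⟨u', -, rfl⟩, h⟩
        rw [hg3 u'] at h
        rw [hfinj h]
      · rintro rfl
        exact ⟨⟨u, Finset.mem_univ u, rfl⟩, hg3 u⟩
    rw [heq, Finset.card_singleton]

end Hall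

section Decomp

variable [Fintype V1] [DecidableEq V1] [Fintype V2] [DecidableEq V2]

lemma decomp (π : Perm (V1 × V2)) : ∀ (k : ℕ) (S : Finset (V1 × V2)),
    (∀ u : V1, (S.filter (fun x => x.1 = u)).card = k) →
    (∀ w : V1, (S.filter (fun x => (π x).1 = w)).card = k) →
    ∃ F : Fin k → Finset (V1 × V2),
      (∀ i, F i ⊆ S) ∧
      (∀ x ∈ S, ∃! i, x ∈ F i) ∧
      (∀ i u, ((F i).filter (fun x => x.1 = u)).card = 1) ∧
      (∀ i w, ((F i).filter (fun x => (π x).1 = w)).card = 1) := by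
  intro k
  induction k with
  | zero =>
    intro S hfib _
    refine ⟨Fin.elim0, fun i => i.elim0, ?_, fun i => i.elim0, fun i => i.elim0⟩
    intro x hx
    exfalso
    have h1 := hfib x.1
    have : x ∈ S.filter (fun y => y.1 = x.1) := Finset.mem_filter.2 ⟨hx, rfl⟩
    rw [Finset.card_eq_zero] at h1
    rw [h1] at this
    exact absurd this (Finset.notMem_empty x)
  | succ k ih =>
    intro S hfib hdest
    obtain ⟨M, hMS, hMfib, hMdest⟩ := hallStep π S (k + 1) (Nat.succ_pos k) hfib hdest
    have hsd : ∀ (p : V1 × V2 → Prop) [DecidablePred p],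
        (S \ M).filter p = S.filter p \ M.filter p := by
      intro p _
      ext x
      simp only [Finset.mem_filter, Finset.mem_sdiff]
      tauto
    have hfib' : ∀ u : V1, ((S \ M).filter (fun x => x.1 = u)).card = k := by
      intro u
      rw [hsd, Finset.card_sdiff_of_subset (Finset.filter_subset_filter _ hMS), hfib u, hMfib u]
      omega
    have hdest' : ∀ w : V1, ((S \ M).filter (fun x => (π x).1 = w)).card = k := by
      intro w
      rw [hsd, Finset.card_sdiff_of_subset (Finset.filter_subset_filter _ hMS), hdest w, hMdest w]
      omega
    obtain ⟨F', hsub', huniq', hfib1', hdest1'⟩ := ih (S \ M) hfib' hdest'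
    refine ⟨fun i => Fin.cases M F' i, ?_, ?_, ?_, ?_⟩
    · intro i
      induction i using Fin.cases with
      | zero => simpa using hMS
      | succ j =>
        intro x hx
        have : x ∈ S \ M := hsub' j (by simpa using hx)
        exact (Finset.mem_sdiff.1 this).1
    · intro x hx
      by_cases hxM : x ∈ M
      · refine ⟨0, hxM, ?_⟩
        intro i hi
        induction i using Fin.cases with
        | zero => rfl
        | succ j =>
          exfalso
          have : x ∈ S \ M := hsub' j (by simpa using hi)
          exact (Finset.mem_sdiff.1 this).2 hxM
      · have hxS' : x ∈ S \ M := Finset.mem_sdiff.2 ⟨hx, hxM⟩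
        obtain ⟨j, hj, hjuniq⟩ := huniq' x hxS'
        refine ⟨j.succ, by simpa using hj, ?_⟩
        intro i hi
        induction i using Fin.cases with
        | zero => exact absurd hi hxM
        | succ j' =>
          have : j' = j := hjuniq j' (by simpa using hi)
          rw [this]
    · intro i u
      induction i using Fin.cases with
      | zero => simpa using hMfib u
      | succ j => simpa using hfib1' j u
    · intro i w
      induction i using Fin.cases with
      | zero => simpa using hMdest w
      | succ j => simpa using hdest1' j w

lemma exists_phi (π : Perm (V1 × V2)) :
    ∃ φ : V1 × V2 → V2,
      Function.Injective (fun x => (x.1, φ x)) ∧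
      Function.Injective (fun x => ((π x).1, φ x)) := by
  classical
  have hfib : ∀ u : V1,
      ((Finset.univ : Finset (V1 × V2)).filter (fun x => x.1 = u)).card = Fintype.card V2 := by
    intro u
    have himg : (Finset.univ : Finset (V1 × V2)).filter (fun x => x.1 = u) =
        Finset.univ.image (fun v : V2 => (u, v)) := by
      ext x
      simp only [Finset.mem_filter, Finset.mem_univ, true_and, Finset.mem_image]
      constructor
      · rintro rfl
        exact ⟨x.2, rfl⟩
      · rintro ⟨v, rfl⟩
        rfl
    rw [himg, Finset.card_image_of_injective _ (fun a b h => by injection h)]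
    simp
  have hdest : ∀ w : V1,
      ((Finset.univ : Finset (V1 × V2)).filter (fun x => (π x).1 = w)).card
        = Fintype.card V2 := by
    intro w
    have himg : ((Finset.univ : Finset (V1 × V2)).filter (fun x => (π x).1 = w)).image π =
        (Finset.univ : Finset (V1 × V2)).filter (fun y => y.1 = w) := by
      ext y
      simp only [Finset.mem_image, Finset.mem_filter, Finset.mem_univ, true_and]
      constructor
      · rintro ⟨x, hx, rfl⟩
        exact hx
      · intro hy
        exact ⟨π⁻¹ y, by simp [hy], by simp⟩
    rw [← hfib w, ← himg, Finset.card_image_of_injective _ π.injective]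
  obtain ⟨F, hsub, huniq, hfib1, hdest1⟩ :=
    decomp π (Fintype.card V2) Finset.univ hfib hdest
  set e : Fin (Fintype.card V2) ≃ V2 := (Fintype.equivFin V2).symm with he
  have hex : ∀ x : V1 × V2, ∃! i, x ∈ F i := fun x => huniq x (Finset.mem_univ x)
  set ich : V1 × V2 → Fin (Fintype.card V2) :=
    fun x => Fintype.choose (fun i => x ∈ F i) (hex x) with hich
  have hmem : ∀ x, x ∈ F (ich x) := fun x => Fintype.choose_spec (fun i => x ∈ F i) (hex x)
  refine ⟨fun x => e (ich x), ?_, ?_⟩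
  · intro x y hxy
    simp only [Prod.mk.injEq] at hxy
    obtain ⟨h1, h2⟩ := hxy
    have hi : ich x = ich y := e.injective h2
    have hx' : x ∈ (F (ich x)).filter (fun z => z.1 = x.1) :=
      Finset.mem_filter.2 ⟨hmem x, rfl⟩
    have hy' : y ∈ (F (ich x)).filter (fun z => z.1 = x.1) := by
      rw [hi]
      exact Finset.mem_filter.2 ⟨hmem y, h1.symm⟩
    exact Finset.card_le_one.1 (le_of_eq (hfib1 (ich x) x.1)) x hx' y hy'
  · intro x y hxy
    simp only [Prod.mk.injEq] at hxy
    obtain ⟨h1, h2⟩ := hxy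
    have hi : ich x = ich y := e.injective h2
    have hx' : x ∈ (F (ich x)).filter (fun z => (π z).1 = (π x).1) :=
      Finset.mem_filter.2 ⟨hmem x, rfl⟩
    have hy' : y ∈ (F (ich x)).filter (fun z => (π z).1 = (π x).1) := by
      rw [hi]
      exact Finset.mem_filter.2 ⟨hmem y, h1.symm⟩
    exact Finset.card_le_one.1 (le_of_eq (hdest1 (ich x) (π x).1)) x hx' y hy'

end Decomp

lemma routable_of_fiberPreserving [Finite V2] (h2 : G2.Connected) {σ : Perm (V1 × V2)}
    (hσ : ∀ x : V1 × V2, (σ x).1 = x.1) :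
    RoutableIn (G1.boxProd G2) σ (routingNumber G2) := by
  have hσ' : ∀ x : V1 × V2, (σ⁻¹ x).1 = x.1 := by
    intro x
    conv_rhs => rw [← Equiv.Perm.apply_inv_self σ x]
    exact (hσ (σ⁻¹ x)).symm
  have hg : ∃ g : V1 → Perm V2, σ = fiberHom V1 V2 g := by
    refine ⟨fun u =>
      { toFun := fun v => (σ (u, v)).2
        invFun := fun v => (σ⁻¹ (u, v)).2
        left_inv := fun v => by
          have h : (u, (σ (u, v)).2) = σ (u, v) := Prod.ext (hσ (u, v)).symm rfl
          show (σ⁻¹ (u, (σ (u, v)).2)).2 = v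
          rw [h, Equiv.Perm.inv_apply_self]
        right_inv := fun v => by
          have h : (u, (σ⁻¹ (u, v)).2) = σ⁻¹ (u, v) := Prod.ext (hσ' (u, v)).symm rfl
          show (σ (u, (σ⁻¹ (u, v)).2)).2 = v
          rw [h, Equiv.Perm.apply_inv_self] }, ?_⟩
    ext x
    · exact hσ x
    · rfl

  obtain ⟨g, rfl⟩ := hg
  exact routableIn_fiberHom fun u => routableIn_routingNumber h2 (g u)

lemma routable_of_rowPreserving [Finite V1] (h1 : G1.Connected) {σ : Perm (V1 × V2)}
    (hσ : ∀ x : V1 × V2, (σ x).2 = x.2) :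
    RoutableIn (G1.boxProd G2) σ (routingNumber G1) := by
  have hσ' : ∀ x : V1 × V2, (σ⁻¹ x).2 = x.2 := by
    intro x
    conv_rhs => rw [← Equiv.Perm.apply_inv_self σ x]
    exact (hσ (σ⁻¹ x)).symm
  have hg : ∃ g : V2 → Perm V1, σ = rowHom V1 V2 g := by
    refine ⟨fun v =>
      { toFun := fun u => (σ (u, v)).1
        invFun := fun u => (σ⁻¹ (u, v)).1
        left_inv := fun u => by
          have h : ((σ (u, v)).1, v) = σ (u, v) := Prod.ext rfl (hσ (u, v)).symm
          show (σ⁻¹ ((σ (u, v)).1, v)).1 = u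
          rw [h, Equiv.Perm.inv_apply_self]
        right_inv := fun u => by
          have h : ((σ⁻¹ (u, v)).1, v) = σ⁻¹ (u, v) := Prod.ext rfl (hσ' (u, v)).symm
          show (σ ((σ⁻¹ (u, v)).1, v)).1 = u
          rw [h, Equiv.Perm.apply_inv_self] }, ?_⟩
    ext x
    · exact rfl
    · exact hσ x
  obtain ⟨g, rfl⟩ := hg
  exact routableIn_rowHom fun v => routableIn_routingNumber h1 (g v)

lemma key_bound [Fintype V1] [DecidableEq V1] [Fintype V2] [DecidableEq V2]
    (h1 : G1.Connected) (h2 : G2.Connected) :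
    routingNumber (G1.boxProd G2) ≤ 2 * routingNumber G2 + routingNumber G1 := by
  apply routingNumber_le
  intro π
  obtain ⟨φ, hinj1, hinj2⟩ := exists_phi π
  set c : Perm (V1 × V2) :=
    Equiv.ofBijective _ (Finite.injective_iff_bijective.1 hinj1) with hcdef
  have hc : ∀ x : V1 × V2, c x = (x.1, φ x) := fun x => rfl
  have hrinj : ∀ v : V2, Function.Injective (fun u : V1 => (π (c.symm (u, v))).1) := by
    intro v u u' huu'
    simp only at huu'
    set x := c.symm (u, v) with hx
    set y := c.symm (u', v) with hy
    have hcx : c x = (u, v) := c.apply_symm_apply _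
    have hcy : c y = (u', v) := c.apply_symm_apply _
    have hφx : φ x = v := by rw [hc x] at hcx; exact congrArg Prod.snd hcx
    have hφy : φ y = v := by rw [hc y] at hcy; exact congrArg Prod.snd hcy
    have hxy : x = y := hinj2 (by
      show ((π x).1, φ x) = ((π y).1, φ y)
      rw [hφx, hφy, huu'])
    have : (u, v) = (u', v) := by rw [← hcx, ← hcy, hxy]
    exact congrArg Prod.fst this
  set r : V2 → Perm V1 := fun v =>
    Equiv.ofBijective _ (Finite.injective_iff_bijective.1 (hrinj v)) with hrdef
  have hrc : ∀ x : V1 × V2, r (c x).2 ((c x).1) = (π x).1 := by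
    intro x
    show (π (c.symm ((c x).1, (c x).2))).1 = (π x).1
    rw [show ((c x).1, (c x).2) = c x from rfl, c.symm_apply_apply]
  set R : Perm (V1 × V2) := rowHom V1 V2 r with hRdef
  set C2 : Perm (V1 × V2) := π * c⁻¹ * R⁻¹ with hC2def
  have hC2fib : ∀ y : V1 × V2, (C2 y).1 = y.1 := by
    intro y
    set x := c.symm (R⁻¹ y) with hxdef
    have hy : R (c x) = y := by
      rw [hxdef, Equiv.Perm.inv_def, c.apply_symm_apply, ← Equiv.Perm.inv_def,
        Equiv.Perm.apply_inv_self]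
    have hC2y : C2 y = π x := by
      rw [hC2def]
      simp only [Equiv.Perm.mul_apply]
      rw [hxdef, Equiv.Perm.inv_def, Equiv.Perm.inv_def]
    rw [hC2y, ← hrc x, ← hy]
    rfl
  have A : RoutableIn (G1.boxProd G2) c (routingNumber G2) :=
    routable_of_fiberPreserving h2 (fun _ => rfl)
  have B : RoutableIn (G1.boxProd G2) R (routingNumber G1) :=
    routable_of_rowPreserving h1 (fun _ => rfl)
  have C : RoutableIn (G1.boxProd G2) C2 (routingNumber G2) :=
    routable_of_fiberPreserving h2 hC2fib
  have total := routable_mul C (routable_mul B A)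
  have hπeq : C2 * (R * c) = π := by rw [hC2def]; group
  rw [hπeq] at total
  exact le_trans (routingTime_le total) (by omega)

end Prod

end RoutingAux

/-- The routing number of the Cartesian (box) product satisfies
`rt(G1 □ G2) ≤ 2 min(rt(G1), rt(G2)) + max(rt(G1), rt(G2))`. -/
theorem routingNumber_boxProd
    {V1 V2 : Type*} [Fintype V1] [DecidableEq V1] [Fintype V2] [DecidableEq V2]
    (G1 : SimpleGraph V1) (G2 : SimpleGraph V2)
    (h1 : G1.Connected) (h2 : G2.Connected) :
    routingNumber (G1.boxProd G2) ≤
      2 * min (routingNumber G1) (routingNumber G2) +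
        max (routingNumber G1) (routingNumber G2) := by
  have key12 := RoutingAux.key_bound h1 h2
  have key21 := RoutingAux.key_bound h2 h1
  have hcomm : routingNumber (G1.boxProd G2) = routingNumber (G2.boxProd G1) :=
    RoutingAux.routingNumber_congr (SimpleGraph.boxProdComm G1 G2)
  rcases le_total (routingNumber G1) (routingNumber G2) with h | h
  · rw [min_eq_left h, max_eq_right h]
    rw [hcomm]
    exact le_trans key21 (by omega)
  · rw [min_eq_right h, max_eq_left h]
    exact le_trans key12 (by omega)
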